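/- Let ν, E be real numbers and let Ψ : ℂ → ℂ be a smooth function with (L_κ^{ν+κ} Ψ)(z) = E Ψ(z) for all z with 1 + κ|z|² > 0. Then (L_κ^ν (∇_{ν+κ} Ψ))(z) = (E + 2ν + κ)(∇_{ν+κ} Ψ)(z) for all z with 1 + κ|z|² > 0. -/

import Mathlib

open Complex MeasureTheory Filter

/-- Wirtinger derivative ∂f/∂z = (1/2)(∂f/∂x − i ∂f/∂y). -/
noncomputable def wderiv (f : ℂ → ℂ) (z : ℂ) : ℂ :=
  (fderiv ℝ f z 1 - Complex.I * fderiv ℝ f z Complex.I) / 2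

/-- Anti-holomorphic Wirtinger derivative ∂f/∂z̄ = (1/2)(∂f/∂x + i ∂f/∂y). -/
noncomputable def wderivBar (f : ℂ → ℂ) (z : ℂ) : ℂ :=
  (fderiv ℝ f z 1 + Complex.I * fderiv ℝ f z Complex.I) / 2

/-- Twisted Laplacian L_κ^ν. -/
noncomputable def twistedLap (κ ν : ℝ) (f : ℂ → ℂ) (z : ℂ) : ℂ :=
  -(((1 + κ * Complex.normSq z : ℝ) : ℂ) ^ 2 * wderiv (wderivBar f) z
    + (ν : ℂ) * ((1 + κ * Complex.normSq z : ℝ) : ℂ) *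
        (z * wderiv f z - (starRingEnd ℂ) z * wderivBar f z)
    - (ν : ℂ) ^ 2 * ((Complex.normSq z : ℝ) : ℂ) * f z)

/-- (∇_α f)(z) = −(1+κ|z|²) ∂f/∂z + α z̄ f(z). -/
noncomputable def nabla (κ α : ℝ) (f : ℂ → ℂ) (z : ℂ) : ℂ :=
  -((1 + κ * Complex.normSq z : ℝ) : ℂ) * wderiv f z + (α : ℂ) * (starRingEnd ℂ) z * f z

/-- (∇*_α f)(z) = (1+κ|z|²) ∂f/∂z̄ + (α−κ) z f(z). -/
noncomputable def nablaStar (κ α : ℝ) (f : ℂ → ℂ) (z : ℂ) : ℂ :=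
  ((1 + κ * Complex.normSq z : ℝ) : ℂ) * wderivBar f z + ((α - κ : ℝ) : ℂ) * z * f z

/-- ∇_{ν+κ} ∘ ∇_{ν+2κ} ∘ ⋯ ∘ ∇_{ν+mκ} (the identity when m = 0). -/
noncomputable def nablaChain (κ : ℝ) : ℕ → ℝ → (ℂ → ℂ) → (ℂ → ℂ)
  | 0, _, f => f
  | m + 1, ν, f => nabla κ (ν + κ) (nablaChain κ m (ν + κ) f)

/-- (D g)(z) = (1+κ|z|²)² ∂g/∂z. -/
noncomputable def Dop (κ : ℝ) (g : ℂ → ℂ) (z : ℂ) : ℂ :=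
  ((1 + κ * Complex.normSq z : ℝ) : ℂ) ^ 2 * wderiv g z

/-- Generalized binomial coefficient C(r,k) for real r. -/
noncomputable def genBinom (r : ℝ) (k : ℕ) : ℝ :=
  (∏ i ∈ Finset.range k, (r - i)) / (Nat.factorial k)

/-- Jacobi polynomial P_j^{(a,b)}(x) with real parameters a, b. -/
noncomputable def jacobiP (a b : ℝ) (j : ℕ) (x : ℝ) : ℝ :=
  ∑ s ∈ Finset.range (j + 1),
    genBinom ((j : ℝ) + a) (j - s) * genBinom ((j : ℝ) + b) s *
      ((x - 1) / 2) ^ s * ((x + 1) / 2) ^ (j - s)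

/-- Pochhammer symbol (a)_n = a(a+1)⋯(a+n−1). -/
noncomputable def risingFactorial (a : ℝ) (n : ℕ) : ℝ :=
  ∏ i ∈ Finset.range n, (a + i)

section WirtingerAPI

variable {f g : ℂ → ℂ} {z : ℂ} {c : ℂ}

lemma wderiv_add (hf : DifferentiableAt ℝ f z) (hg : DifferentiableAt ℝ g z) :
    wderiv (fun w => f w + g w) z = wderiv f z + wderiv g z := by
  unfold wderiv; rw [fderiv_fun_add hf hg]; simp; ring

lemma wderiv_sub (hf : DifferentiableAt ℝ f z) (hg : DifferentiableAt ℝ g z) :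
    wderiv (fun w => f w - g w) z = wderiv f z - wderiv g z := by
  unfold wderiv; rw [fderiv_fun_sub hf hg]; simp; ring

lemma wderiv_mul (hf : DifferentiableAt ℝ f z) (hg : DifferentiableAt ℝ g z) :
    wderiv (fun w => f w * g w) z = wderiv f z * g z + f z * wderiv g z := by
  unfold wderiv; rw [fderiv_fun_mul hf hg]; simp [smul_eq_mul]; ring

lemma wderivBar_add (hf : DifferentiableAt ℝ f z) (hg : DifferentiableAt ℝ g z) :
    wderivBar (fun w => f w + g w) z = wderivBar f z + wderivBar g z := by
  unfold wderivBar; rw [fderiv_fun_add hf hg]; simp; ring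

lemma wderivBar_sub (hf : DifferentiableAt ℝ f z) (hg : DifferentiableAt ℝ g z) :
    wderivBar (fun w => f w - g w) z = wderivBar f z - wderivBar g z := by
  unfold wderivBar; rw [fderiv_fun_sub hf hg]; simp; ring

lemma wderivBar_mul (hf : DifferentiableAt ℝ f z) (hg : DifferentiableAt ℝ g z) :
    wderivBar (fun w => f w * g w) z = wderivBar f z * g z + f z * wderivBar g z := by
  unfold wderivBar; rw [fderiv_fun_mul hf hg]; simp [smul_eq_mul]; ring

lemma wderiv_neg (hf : DifferentiableAt ℝ f z) :
    wderiv (fun w => -f w) z = -wderiv f z := by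
  unfold wderiv; rw [fderiv_fun_neg]; simp; ring

lemma wderivBar_neg (hf : DifferentiableAt ℝ f z) :
    wderivBar (fun w => -f w) z = -wderivBar f z := by
  unfold wderivBar; rw [fderiv_fun_neg]; simp; ring

lemma wderiv_const : wderiv (fun _ => c) z = 0 := by
  unfold wderiv; simp

lemma wderivBar_const : wderivBar (fun _ => c) z = 0 := by
  unfold wderivBar; simp

lemma wderiv_id : wderiv (fun w => w) z = 1 := by
  unfold wderiv; rw [fderiv_id']; simp [Complex.I_mul_I]

lemma wderivBar_id : wderivBar (fun w => w) z = 0 := by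
  unfold wderivBar; rw [fderiv_id']; simp [Complex.I_mul_I]

lemma fderiv_conj_apply (z v : ℂ) :
    fderiv ℝ (fun w : ℂ => (starRingEnd ℂ) w) z v = (starRingEnd ℂ) v := by
  have : (fun w : ℂ => (starRingEnd ℂ) w) = (Complex.conjCLE : ℂ → ℂ) := rfl
  rw [this, ContinuousLinearEquiv.fderiv]
  rfl

lemma wderiv_conj : wderiv (fun w => (starRingEnd ℂ) w) z = 0 := by
  unfold wderiv; rw [fderiv_conj_apply, fderiv_conj_apply]
  simp [Complex.conj_I]

lemma wderivBar_conj : wderivBar (fun w => (starRingEnd ℂ) w) z = 1 := by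
  unfold wderivBar; rw [fderiv_conj_apply, fderiv_conj_apply]
  simp [Complex.conj_I, Complex.I_mul_I]

@[fun_prop]
lemma diff_conj : Differentiable ℝ (fun w : ℂ => (starRingEnd ℂ) w) :=
  Complex.conjCLE.differentiable

lemma ContDiff.wderiv' (hf : ContDiff ℝ (⊤:ℕ∞) f) : ContDiff ℝ (⊤:ℕ∞) (wderiv f) := by
  have h : ContDiff ℝ (⊤:ℕ∞) (fderiv ℝ f) := hf.fderiv_right (by exact_mod_cast le_rfl)
  have h1 : ContDiff ℝ (⊤:ℕ∞) (fun z => fderiv ℝ f z 1) := h.clm_apply contDiff_const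
  have h2 : ContDiff ℝ (⊤:ℕ∞) (fun z => fderiv ℝ f z Complex.I) := h.clm_apply contDiff_const
  exact ((h1.sub (contDiff_const.mul h2)).div_const 2)

lemma ContDiff.wderivBar' (hf : ContDiff ℝ (⊤:ℕ∞) f) : ContDiff ℝ (⊤:ℕ∞) (wderivBar f) := by
  have h : ContDiff ℝ (⊤:ℕ∞) (fderiv ℝ f) := hf.fderiv_right (by exact_mod_cast le_rfl)
  have h1 : ContDiff ℝ (⊤:ℕ∞) (fun z => fderiv ℝ f z 1) := h.clm_apply contDiff_const
  have h2 : ContDiff ℝ (⊤:ℕ∞) (fun z => fderiv ℝ f z Complex.I) := h.clm_apply contDiff_const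
  exact ((h1.add (contDiff_const.mul h2)).div_const 2)

lemma fderiv_fderiv_apply (hf : ContDiff ℝ (⊤:ℕ∞) f) (v w : ℂ) :
    fderiv ℝ (fun z => fderiv ℝ f z v) z w = fderiv ℝ (fderiv ℝ f) z w v := by
  have h : ContDiff ℝ (⊤:ℕ∞) (fderiv ℝ f) := hf.fderiv_right (by exact_mod_cast le_rfl)
  rw [fderiv_clm_apply (h.differentiable (by simp) z) (differentiableAt_const v)]
  simp

lemma sym2 (hf : ContDiff ℝ (⊤:ℕ∞) f) (v w : ℂ) :
    fderiv ℝ (fun z => fderiv ℝ f z v) z w = fderiv ℝ (fun z => fderiv ℝ f z w) z v := by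
  rw [fderiv_fderiv_apply hf, fderiv_fderiv_apply hf]
  have h : ContDiff ℝ (⊤:ℕ∞) (fderiv ℝ f) := hf.fderiv_right (by exact_mod_cast le_rfl)
  exact second_derivative_symmetric
    (fun y => (hf.differentiable (by simp) y).hasFDerivAt)
    ((h.differentiable (by simp) z).hasFDerivAt) w v

lemma wderiv_wderivBar_comm (hf : ContDiff ℝ (⊤:ℕ∞) f) (z : ℂ) :
    wderiv (wderivBar f) z = wderivBar (wderiv f) z := by
  have h : ContDiff ℝ (⊤:ℕ∞) (fderiv ℝ f) := hf.fderiv_right (by exact_mod_cast le_rfl)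
  have hd1 : DifferentiableAt ℝ (fun z => fderiv ℝ f z 1) z :=
    ((h.clm_apply contDiff_const).differentiable (by simp)).differentiableAt
  have hdI : DifferentiableAt ℝ (fun z => fderiv ℝ f z Complex.I) z :=
    ((h.clm_apply contDiff_const).differentiable (by simp)).differentiableAt
  have keyB : ∀ v, fderiv ℝ (fun w => (fderiv ℝ f w 1 + Complex.I * fderiv ℝ f w Complex.I)/2) z v
      = (fderiv ℝ (fun z => fderiv ℝ f z 1) z v
          + Complex.I * fderiv ℝ (fun z => fderiv ℝ f z Complex.I) z v)/2 := by
    intro v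
    have e : (fun w => (fderiv ℝ f w 1 + Complex.I * fderiv ℝ f w Complex.I)/2) = fun w =>
        (2⁻¹:ℂ) * (fderiv ℝ f w 1 + Complex.I * fderiv ℝ f w Complex.I) := by
      funext w; ring
    rw [e, fderiv_const_mul (hd1.fun_add (hdI.const_mul _)),
      fderiv_fun_add hd1 (hdI.const_mul _), fderiv_const_mul hdI]
    simp; ring
  have keyP : ∀ v, fderiv ℝ (fun w => (fderiv ℝ f w 1 - Complex.I * fderiv ℝ f w Complex.I)/2) z v
      = (fderiv ℝ (fun z => fderiv ℝ f z 1) z v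
          - Complex.I * fderiv ℝ (fun z => fderiv ℝ f z Complex.I) z v)/2 := by
    intro v
    have e : (fun w => (fderiv ℝ f w 1 - Complex.I * fderiv ℝ f w Complex.I)/2) = fun w =>
        (2⁻¹:ℂ) * (fderiv ℝ f w 1 - Complex.I * fderiv ℝ f w Complex.I) := by
      funext w; ring
    rw [e, fderiv_const_mul (hd1.fun_sub (hdI.const_mul _)),
      fderiv_fun_sub hd1 (hdI.const_mul _), fderiv_const_mul hdI]
    simp; ring
  have hs := sym2 hf (Complex.I) 1 (z := z)
  show (fderiv ℝ (fun w => (fderiv ℝ f w 1 + Complex.I * fderiv ℝ f w Complex.I)/2) z 1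
      - Complex.I * fderiv ℝ (fun w => (fderiv ℝ f w 1 + Complex.I * fderiv ℝ f w Complex.I)/2) z Complex.I)/2
    = (fderiv ℝ (fun w => (fderiv ℝ f w 1 - Complex.I * fderiv ℝ f w Complex.I)/2) z 1
      + Complex.I * fderiv ℝ (fun w => (fderiv ℝ f w 1 - Complex.I * fderiv ℝ f w Complex.I)/2) z Complex.I)/2
  rw [keyB, keyB, keyP, keyP, hs]
  ring

end WirtingerAPI

lemma key_intertwine (κ ν : ℝ) (Ψ : ℂ → ℂ) (hΨ : ContDiff ℝ (⊤ : ℕ∞) Ψ) (z : ℂ) :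
    twistedLap κ ν (nabla κ (ν + κ) Ψ) z
      = nabla κ (ν + κ) (twistedLap κ (ν + κ) Ψ) z
        + ((2 * ν + κ : ℝ) : ℂ) * nabla κ (ν + κ) Ψ z := by
  have hA : ∀ w : ℂ, ((1 + κ * Complex.normSq w : ℝ) : ℂ)
      = 1 + (κ : ℂ) * (w * (starRingEnd ℂ) w) := by
    intro w; rw [Complex.mul_conj]; push_cast; ring
  have hN : ∀ w : ℂ, ((Complex.normSq w : ℝ) : ℂ) = w * (starRingEnd ℂ) w := by
    intro w; rw [Complex.mul_conj]
  have h1 : ContDiff ℝ (⊤:ℕ∞) (wderiv Ψ) := hΨ.wderiv'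
  have h2 : ContDiff ℝ (⊤:ℕ∞) (wderivBar Ψ) := hΨ.wderivBar'
  have h3 : ContDiff ℝ (⊤:ℕ∞) (wderiv (wderivBar Ψ)) := h2.wderiv'
  have d0 : Differentiable ℝ Ψ := hΨ.differentiable (by simp)
  have d1 : Differentiable ℝ (wderiv Ψ) := h1.differentiable (by simp)
  have d2 : Differentiable ℝ (wderivBar Ψ) := h2.differentiable (by simp)
  have d3 : Differentiable ℝ (wderiv (wderivBar Ψ)) := h3.differentiable (by simp)
  have hcomm : ∀ w, wderivBar (wderiv Ψ) w = wderiv (wderivBar Ψ) w :=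
    fun w => (wderiv_wderivBar_comm hΨ w).symm
  have hg : nabla κ (ν + κ) Ψ = fun w =>
      -((1 + (κ:ℂ) * (w * (starRingEnd ℂ) w)) * wderiv Ψ w)
        + ((ν + κ : ℝ) : ℂ) * ((starRingEnd ℂ) w * Ψ w) := by
    funext w; simp only [nabla, hA]; ring
  have hQg : wderivBar (nabla κ (ν + κ) Ψ) = fun w =>
      -((κ:ℂ) * (w * wderiv Ψ w)
          + (1 + (κ:ℂ) * (w * (starRingEnd ℂ) w)) * wderiv (wderivBar Ψ) w)
        + ((ν + κ : ℝ) : ℂ) * (Ψ w + (starRingEnd ℂ) w * wderivBar Ψ w) := by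
    funext w
    rw [hg]
    simp (disch := fun_prop) only [wderivBar_add, wderivBar_sub, wderivBar_neg, wderivBar_mul,
      wderivBar_const, wderivBar_id, wderivBar_conj, hcomm]
    ring
  have hh : twistedLap κ (ν + κ) Ψ = fun w =>
      -((1 + (κ:ℂ) * (w * (starRingEnd ℂ) w))
            * ((1 + (κ:ℂ) * (w * (starRingEnd ℂ) w)) * wderiv (wderivBar Ψ) w)
          + ((ν + κ : ℝ) : ℂ) * ((1 + (κ:ℂ) * (w * (starRingEnd ℂ) w))
              * (w * wderiv Ψ w - (starRingEnd ℂ) w * wderivBar Ψ w))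
          - ((ν + κ : ℝ) : ℂ) * (((ν + κ : ℝ) : ℂ) * (w * (starRingEnd ℂ) w * Ψ w))) := by
    funext w; simp only [twistedLap, hA, hN]; ring
  simp only [twistedLap, nabla]
  rw [hQg, hg, hh]
  simp (disch := fun_prop) only [wderiv_add, wderiv_sub, wderiv_neg, wderiv_mul,
    wderiv_const, wderiv_id, wderiv_conj, wderivBar_add, wderivBar_sub, wderivBar_neg,
    wderivBar_mul, wderivBar_const, wderivBar_id, wderivBar_conj, hcomm]
  simp only [hA, hN]
  push_cast
  ring
theorem stmt3 (κ ν E : ℝ) (Ψ : ℂ → ℂ) (hΨ : ContDiff ℝ (⊤ : ℕ∞) Ψ)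
    (hE : ∀ z : ℂ, 0 < 1 + κ * Complex.normSq z →
      twistedLap κ (ν + κ) Ψ z = (E : ℂ) * Ψ z) :
    ∀ z : ℂ, 0 < 1 + κ * Complex.normSq z →
      twistedLap κ ν (nabla κ (ν + κ) Ψ) z
        = ((E + 2 * ν + κ : ℝ) : ℂ) * nabla κ (ν + κ) Ψ z := by
  intro z hz
  have hopen : IsOpen {w : ℂ | 0 < 1 + κ * Complex.normSq w} :=
    isOpen_lt continuous_const
      (continuous_const.add (continuous_const.mul Complex.continuous_normSq))
  have hev : twistedLap κ (ν + κ) Ψ =ᶠ[nhds z] fun w => (E : ℂ) * Ψ w := by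
    filter_upwards [hopen.mem_nhds hz] with w hw using hE w hw
  have hd : DifferentiableAt ℝ Ψ z :=
    (hΨ.differentiable (by simp)).differentiableAt
  have hwd : wderiv (twistedLap κ (ν + κ) Ψ) z = (E : ℂ) * wderiv Ψ z := by
    have h1 : wderiv (twistedLap κ (ν + κ) Ψ) z = wderiv (fun w => (E : ℂ) * Ψ w) z := by
      unfold wderiv; rw [hev.fderiv_eq]
    rw [h1]
    have h2 : (fun w => (E : ℂ) * Ψ w) = (fun w => (fun _ : ℂ => (E:ℂ)) w * Ψ w) := rfl
    rw [h2, wderiv_mul (differentiableAt_const _) hd, wderiv_const]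
    ring
  have hkey := key_intertwine κ ν Ψ hΨ z
  rw [hkey]
  have hnab : nabla κ (ν + κ) (twistedLap κ (ν + κ) Ψ) z = (E : ℂ) * nabla κ (ν + κ) Ψ z := by
    simp only [nabla, hwd, hE z hz]
    ring
  rw [hnab]
  push_cast
  ring
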